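/- For any n ∈ ℕ and any choice of signs ε_R ∈ {-1,+1} indexed by dyadic rectangles R ⊆ [0,1)² of area 2^{-n}, the function F(x) = Σ_{|R|=2^{-n}} ε_R h_R(x) attains the value n+1 at some point x ∈ [0,1)², where h_R denotes the L^∞-normalized Haar function on R. -/

import Mathlib

open Finset

/-- The L^∞-normalized Haar function of the dyadic interval `[m/2^k, (m+1)/2^k)`:
`-1` on the left half, `+1` on the right half, `0` outside. -/
noncomputable def haar (k m : ℕ) (x : ℝ) : ℝ :=
  if (m : ℝ) / 2 ^ k ≤ x ∧ x < ((m : ℝ) + 1) / 2 ^ k then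
    (if x < (2 * (m : ℝ) + 1) / 2 ^ (k + 1) then -1 else 1)
  else 0

/-- The Haar function of the dyadic rectangle `[m₁/2^k₁,(m₁+1)/2^k₁) × [m₂/2^k₂,(m₂+1)/2^k₂)`. -/
noncomputable def haar2 (k₁ m₁ k₂ m₂ : ℕ) (p : ℝ × ℝ) : ℝ :=
  haar k₁ m₁ p.1 * haar k₂ m₂ p.2

/-- The hyperbolic Haar sum `∑_{|R| = 2^{-n}} α_R h_R` over dyadic rectangles of area `2^{-n}`. -/
noncomputable def sbSum (n : ℕ) (α : ℕ → ℕ → ℕ → ℝ) (p : ℝ × ℝ) : ℝ :=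
  ∑ k ∈ Finset.range (n + 1), ∑ m₁ ∈ Finset.range (2 ^ k),
    ∑ m₂ ∈ Finset.range (2 ^ (n - k)), α k m₁ m₂ * haar2 k m₁ (n - k) m₂ p

/-- The unit square `[0,1)²`. -/
def unitSq : Set (ℝ × ℝ) := Set.Ico (0 : ℝ) 1 ×ˢ Set.Ico (0 : ℝ) 1

/-- bit chosen at level k -/
noncomputable def pickB (n : ℕ) (ε : ℕ → ℕ → ℕ → ℝ) (M k : ℕ) : ℕ :=
  if ε k M (2^(n-k)-1) = 1 then 1 else 0

/-- partial dyadic position after k levels -/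
noncomputable def pickM (n : ℕ) (ε : ℕ → ℕ → ℕ → ℝ) : ℕ → ℕ
  | 0 => 0
  | k+1 => 2 * pickM n ε k + pickB n ε (pickM n ε k) k

lemma pickB_le (n ε M k) : pickB n ε M k ≤ 1 := by
  unfold pickB; split <;> omega

lemma pickM_lt (n ε) : ∀ k, pickM n ε k < 2^k
  | 0 => by simp [pickM]
  | k+1 => by
      have h1 := pickM_lt n ε k
      have h2 := pickB_le n ε (pickM n ε k) k
      simp only [pickM, pow_succ]; omega

lemma pickM_nest (n ε k) : ∀ j, pickM n ε k * 2^j ≤ pickM n ε (k+j) ∧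
    pickM n ε (k+j) < (pickM n ε k + 1) * 2^j
  | 0 => by simp
  | j+1 => by
      obtain ⟨h1, h2⟩ := pickM_nest n ε k j
      have h3 := pickB_le n ε (pickM n ε (k+j)) (k+j)
      have : pickM n ε (k+(j+1)) = 2 * pickM n ε (k+j) + pickB n ε (pickM n ε (k+j)) (k+j) := rfl
      rw [this]
      constructor
      · calc pickM n ε k * 2^(j+1) = 2 * (pickM n ε k * 2^j) := by ring
          _ ≤ 2 * pickM n ε (k+j) := by omega
          _ ≤ _ := by omega
      · calc 2 * pickM n ε (k+j) + pickB n ε (pickM n ε (k+j)) (k+j)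
            < 2 * (pickM n ε (k+j) + 1) := by omega
          _ ≤ 2 * ((pickM n ε k + 1) * 2^j) := by omega
          _ = (pickM n ε k + 1) * 2^(j+1) := by ring

lemma haar_eval (k N m j : ℕ) (hk : k < N) :
    haar k m ((j:ℝ)/2^N) =
      if m * 2^(N-k) ≤ j ∧ j < (m+1) * 2^(N-k) then
        (if j < (2*m+1) * 2^(N-k-1) then -1 else 1) else 0 := by
  unfold haar
  have hNk : (2:ℝ)^N = 2^k * 2^(N-k) := by rw [← pow_add]; congr 1; omega
  have hNk1 : (2:ℝ)^N = 2^(k+1) * 2^(N-k-1) := by rw [← pow_add]; congr 1; omega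
  have h1 : ((m : ℝ) / 2 ^ k ≤ (j:ℝ)/2^N) ↔ m * 2^(N-k) ≤ j := by
    rw [div_le_div_iff₀ (by positivity) (by positivity), hNk]
    rw [show (m:ℝ) * (2^k * 2^(N-k)) = ((m * 2^(N-k) : ℕ):ℝ) * 2^k by push_cast; ring]
    rw [mul_le_mul_iff_of_pos_right (by positivity), Nat.cast_le]
  have h2 : ((j:ℝ)/2^N < ((m : ℝ) + 1) / 2 ^ k) ↔ j < (m+1) * 2^(N-k) := by
    rw [div_lt_div_iff₀ (by positivity) (by positivity), hNk]
    rw [show ((m:ℝ)+1) * (2^k * 2^(N-k)) = (((m+1) * 2^(N-k) : ℕ):ℝ) * 2^k by push_cast; ring]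
    rw [mul_lt_mul_iff_of_pos_right (by positivity), Nat.cast_lt]
  have h3 : ((j:ℝ)/2^N < (2 * (m : ℝ) + 1) / 2 ^ (k+1)) ↔ j < (2*m+1) * 2^(N-k-1) := by
    rw [div_lt_div_iff₀ (by positivity) (by positivity), hNk1]
    rw [show (2*(m:ℝ)+1) * (2^(k+1) * 2^(N-k-1)) = (((2*m+1) * 2^(N-k-1) : ℕ):ℝ) * 2^(k+1) by
      push_cast; ring]
    rw [mul_lt_mul_iff_of_pos_right (by positivity), Nat.cast_lt]
  simp only [h1, h2, h3]

lemma interval_unique {a b j t : ℕ} (ha : a*t ≤ j) (ha' : j < (a+1)*t)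
    (hb : b*t ≤ j) (hb' : j < (b+1)*t) : a = b := by nlinarith

/-- The signed small ball sum attains the value `n+1` at some point of `[0,1)²`. -/
theorem signed_small_ball_attains (n : ℕ) (ε : ℕ → ℕ → ℕ → ℝ)
    (hε : ∀ k m₁ m₂, ε k m₁ m₂ = 1 ∨ ε k m₁ m₂ = -1) :
    ∃ p ∈ unitSq, sbSum n ε p = n + 1 := by
  set J := pickM n ε (n+1) with hJ
  refine ⟨((J:ℝ)/2^(n+1), ((2^(n+1)-1 : ℕ):ℝ)/2^(n+1)), ⟨⟨by positivity, ?_⟩, ⟨by positivity, ?_⟩⟩, ?_⟩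
  · rw [div_lt_one (by positivity)]
    exact_mod_cast (by exact_mod_cast pickM_lt n ε (n+1) : (J:ℝ) < ((2^(n+1):ℕ):ℝ))
  · rw [div_lt_one (by positivity)]
    have : (2^(n+1)-1 : ℕ) < 2^(n+1) := by have := Nat.one_le_two_pow (n := n+1); omega
    exact_mod_cast this
  · unfold sbSum
    -- evaluate y-haar
    have hy : ∀ k ≤ n, ∀ m₂ < 2^(n-k),
        haar (n-k) m₂ (((2^(n+1)-1 : ℕ):ℝ)/2^(n+1)) = if m₂ = 2^(n-k)-1 then 1 else 0 := by
      intro k hk m₂ hm₂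
      rw [haar_eval _ _ _ _ (by omega)]
      have e1 : 2^(n-k) * 2^(n+1-(n-k)) = 2^(n+1) := by rw [← pow_add]; congr 1; omega
      have e2 : 2^(n-k) * 2^(n+1-(n-k)-1) = 2^n := by rw [← pow_add]; congr 1; omega
      have p1 : 0 < 2^(n+1-(n-k)) := Nat.pow_pos (by norm_num)
      have p2 : 0 < 2^(n+1-(n-k)-1) := Nat.pow_pos (by norm_num)
      have p3 : 0 < 2^(n-k) := Nat.pow_pos (by norm_num)
      have p4 : (0:ℕ) < 2^n := Nat.pow_pos (by norm_num)
      have p5 : 2^n < 2^(n+1) := by rw [pow_succ]; omega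
      have e3 : 2^(n-k+1) * 2^(n+1-(n-k)-1) = 2^(n+1) := by rw [← pow_add]; congr 1; omega
      by_cases hm : m₂ = 2^(n-k)-1
      · subst hm
        have c1 : (2^(n-k)-1) * 2^(n+1-(n-k)) ≤ 2^(n+1)-1 := by
          rw [Nat.sub_mul, e1, Nat.one_mul]; omega
        have c2 : 2^(n+1)-1 < (2^(n-k)-1+1) * 2^(n+1-(n-k)) := by
          rw [Nat.sub_add_cancel (by omega), e1]; omega
        have c3 : ¬ (2^(n+1)-1 < (2*(2^(n-k)-1)+1) * 2^(n+1-(n-k)-1)) := by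
          rw [show 2*(2^(n-k)-1)+1 = 2^(n-k+1)-1 by rw [pow_succ]; omega]
          rw [Nat.sub_mul, e3, Nat.one_mul]
          omega
        rw [if_pos ⟨c1, c2⟩, if_neg c3, if_pos rfl]
      · rw [if_neg, if_neg hm]
        rintro ⟨h1, h2⟩
        apply hm
        refine interval_unique h1 h2 ?_ ?_
        · rw [Nat.sub_mul, e1, Nat.one_mul]; omega
        · rw [Nat.sub_add_cancel (by omega), e1]; omega
    -- evaluate x-haar
    have hx : ∀ k ≤ n, ∀ m₁ < 2^k,
        haar k m₁ ((J:ℝ)/2^(n+1)) =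
          if m₁ = pickM n ε k then (if pickB n ε (pickM n ε k) k = 1 then 1 else -1) else 0 := by
      intro k hk m₁ hm₁
      rw [haar_eval _ _ _ _ (by omega)]
      obtain ⟨n1, n2⟩ := pickM_nest n ε k (n+1-k)
      rw [show k + (n+1-k) = n+1 by omega] at n1 n2
      obtain ⟨s1, s2⟩ := pickM_nest n ε (k+1) (n-k)
      rw [show k + 1 + (n-k) = n+1 by omega] at s1 s2
      have hMk1 : pickM n ε (k+1) = 2 * pickM n ε k + pickB n ε (pickM n ε k) k := rfl
      have erw : (2 * pickM n ε k + 1) * 2^(n+1-k-1) = (2 * pickM n ε k + 1) * 2^(n-k) := by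
        congr 2; omega
      by_cases hm : m₁ = pickM n ε k
      · subst hm
        rw [if_pos ⟨n1, n2⟩, erw, if_pos rfl]
        by_cases hb : pickB n ε (pickM n ε k) k = 1
        · have c3 : ¬ (J < (2 * pickM n ε k + 1) * 2^(n-k)) := by
            rw [not_lt]
            calc (2 * pickM n ε k + 1) * 2^(n-k) = pickM n ε (k+1) * 2^(n-k) := by rw [hMk1, hb]
              _ ≤ J := s1
          rw [if_pos hb, if_neg c3]
        · have hb0 : pickB n ε (pickM n ε k) k = 0 := by
            have := pickB_le n ε (pickM n ε k) k; omega
          have c3 : J < (2 * pickM n ε k + 1) * 2^(n-k) :=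
            calc J < (pickM n ε (k+1) + 1) * 2^(n-k) := s2
              _ = (2 * pickM n ε k + 1) * 2^(n-k) := by rw [hMk1, hb0]
          rw [if_neg hb, if_pos c3]
      · rw [if_neg, if_neg hm]
        rintro ⟨h1, h2⟩
        exact hm (interval_unique h1 h2 n1 n2)
    -- now compute the sum
    rw [show ((n:ℝ)+1) = ∑ k ∈ Finset.range (n+1), (1:ℝ) by simp]
    apply Finset.sum_congr rfl
    intro k hk
    rw [Finset.mem_range] at hk
    have hk' : k ≤ n := by omega
    rw [Finset.sum_eq_single (pickM n ε k)]
    · rw [Finset.sum_eq_single (2^(n-k)-1)]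
      · unfold haar2
        simp only
        rw [hx k hk' _ (pickM_lt n ε k), hy k hk' _ (by have := Nat.pow_pos (n := n-k) (show 0<2 by norm_num); omega)]
        rw [if_pos rfl, if_pos rfl, mul_one]
        rcases hε k (pickM n ε k) (2^(n-k)-1) with h | h
        · rw [h, if_pos (by unfold pickB; rw [if_pos h]), mul_one]
        · rw [h, if_neg (by unfold pickB; rw [if_neg (by rw [h]; norm_num)]; omega)]
          norm_num
      · intro m₂ hm₂ hne
        rw [Finset.mem_range] at hm₂
        unfold haar2
        simp only
        rw [hy k hk' _ hm₂, if_neg hne, mul_zero, mul_zero]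
      · intro h
        exact absurd (Finset.mem_range.mpr (by have := Nat.pow_pos (n := n-k) (show 0<2 by norm_num); omega)) h
    · intro m₁ hm₁ hne
      rw [Finset.mem_range] at hm₁
      apply Finset.sum_eq_zero
      intro m₂ _
      unfold haar2
      simp only
      rw [hx k hk' _ hm₁, if_neg hne, zero_mul, mul_zero]
    · intro h
      exact absurd (Finset.mem_range.mpr (pickM_lt n ε k)) h
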